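/- Gauss's summation theorem: for complex numbers $a,b,c$ with $\mathrm{Re}(c-a-b)>0$ and $c$ not a nonpositive integer, ${}_2F_1(a,b;c;1)=\frac{\Gamma(c)\Gamma(c-a-b)}{\Gamma(c-a)\Gamma(c-b)}$. -/

import Mathlib

open Filter Finset Topology

/-- Complex Pochhammer symbol `(a)_n`. -/
noncomputable def pochC (a : ℂ) (n : ℕ) : ℂ := ∏ i ∈ Finset.range n, (a + i)

noncomputable def pochR (x : ℝ) (n : ℕ) : ℝ := ∏ i ∈ Finset.range n, (x + i)

lemma pochR_succ (x : ℝ) (n : ℕ) : pochR x (n+1) = pochR x n * (x + n) :=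
  Finset.prod_range_succ _ _

lemma pochR_pos {x : ℝ} (hx : 0 < x) (n : ℕ) : 0 < pochR x n :=
  Finset.prod_pos fun i _ => by positivity

lemma pochC_succ (a : ℂ) (n : ℕ) : pochC a (n+1) = pochC a n * (a + n) :=
  Finset.prod_range_succ _ _

lemma pochC_succ' (a : ℂ) (n : ℕ) : pochC a (n+1) = a * pochC (a+1) n := by
  rw [pochC, Finset.prod_range_succ']
  simp [pochC, mul_comm, add_assoc, add_comm (1:ℂ)]

lemma pochC_ne_zero {c : ℂ} (hc : ∀ n : ℕ, c ≠ -(n:ℂ)) (n : ℕ) : pochC c n ≠ 0 :=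
  Finset.prod_ne_zero_iff.2 fun i _ => by
    intro h; exact hc i (by linear_combination h)

lemma norm_pochC_le (a : ℂ) (n : ℕ) : ‖pochC a n‖ ≤ pochR ‖a‖ n := by
  rw [pochC, pochR]
  rw [norm_prod]
  refine Finset.prod_le_prod (fun i _ => norm_nonneg _) fun i _ => ?_
  simpa using (norm_add_le a i).trans (by simp)

lemma le_norm_pochC {x : ℝ} (hx : 0 < x) {c : ℂ} (hxc : x ≤ c.re) (n : ℕ) :
    pochR x n ≤ ‖pochC c n‖ := by
  rw [pochC, pochR, norm_prod]
  refine Finset.prod_le_prod (fun i _ => by positivity) fun i _ => ?_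
  calc x + i ≤ (c + i).re := by simp [Complex.add_re]; linarith
  _ ≤ ‖c + i‖ := Complex.re_le_norm _

/-- Telescoping summability: `∑ (α)_n/(β)_n` converges when `β > α + 1 > 1`. -/
lemma summable_pochR_ratio {α β : ℝ} (hα : 0 < α) (hs : α + 1 < β) :
    Summable (fun n => pochR α n / pochR β n) := by
  have hβ : 0 < β := by linarith
  apply summable_of_sum_range_le (c := (β - 1)/(β - α - 1))
    (fun n => div_nonneg (pochR_pos hα n).le (pochR_pos hβ n).le)
  intro N
  set t : ℕ → ℝ := fun n => pochR α n * (β - 1 + n) / (pochR β n * (β - α - 1)) with ht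
  have key : ∀ n, pochR α n / pochR β n = t n - t (n+1) := by
    intro n
    have h1 : pochR β (n+1) = pochR β n * (β + n) := pochR_succ _ _
    have h2 : pochR α (n+1) = pochR α n * (α + n) := pochR_succ _ _
    have hb1 : pochR β n ≠ 0 := (pochR_pos hβ n).ne'
    have hb2 : β + n ≠ 0 := by positivity
    have hd : β - α - 1 ≠ 0 := by linarith
    rw [ht]; simp only [h1, h2]
    field_simp
    push_cast
    ring
  rw [Finset.sum_congr rfl fun n _ => key n, Finset.sum_range_sub']
  have ht0 : t 0 = (β - 1)/(β - α - 1) := by simp [ht, pochR]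
  have htN : 0 ≤ t N := by
    have h1 := pochR_pos hα N
    have h2 := pochR_pos hβ N
    have h3 : (0:ℝ) ≤ β - 1 + N := by have := Nat.cast_nonneg (α := ℝ) N; linarith
    have h4 : (0:ℝ) < β - α - 1 := by linarith
    exact div_nonneg (mul_nonneg h1.le h3) (mul_nonneg h2.le h4.le)
  rw [ht0] at *
  linarith [htN]

/-- Terms of `∑ (α)_n/(β)_n` tend to zero for any positive gap (Bernoulli trick). -/
lemma tendsto_pochR_ratio {α β : ℝ} (hα : 0 < α) (hβ : α < β) :
    Tendsto (fun n => pochR α n / pochR β n) atTop (𝓝 0) := by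
  set d := β - α with hd
  have hd0 : 0 < d := by simp [hd]; linarith
  obtain ⟨m, hm⟩ : ∃ m : ℕ, 2/d ≤ m := exists_nat_ge _
  have hm0 : 0 < (m:ℝ) := lt_of_lt_of_le (by positivity) hm
  have hmd : 1 < (m:ℝ) * d := by
    have : 2 ≤ (m:ℝ) * d := by
      rw [div_le_iff₀ hd0] at hm; nlinarith
    linarith
  set q : ℕ → ℝ := fun n => pochR α n / pochR β n with hq
  set Q : ℕ → ℝ := fun n => pochR β n / pochR (β + m*d) n with hQ
  have hβ0 : 0 < β := hα.trans hβ
  have hq0 : ∀ n, 0 ≤ q n := fun n =>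
    div_nonneg (pochR_pos hα n).le (pochR_pos hβ0 n).le
  have key : ∀ n, q n ^ m ≤ Q n := by
    intro n
    have h1 : q n ^ m = (∏ i ∈ Finset.range n, (α+i)^m) / ∏ i ∈ Finset.range n, (β+i)^m := by
      rw [hq]; simp [div_pow, pochR, ← Finset.prod_pow]
    rw [h1, hQ, div_le_div_iff₀ (Finset.prod_pos fun i _ => by positivity)
      (pochR_pos (by positivity) n),
      pochR, pochR, ← Finset.prod_mul_distrib, ← Finset.prod_mul_distrib]
    refine Finset.prod_le_prod (fun i _ => by positivity) fun i _ => ?_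
    have hai : 0 < α + i := by positivity
    have hbi : 0 < β + i := by positivity
    have e1 : (1:ℝ) + d/(α+i) = (β+i)/(α+i) := by field_simp; ring
    have h2 : 1 + m*(d/(α+i)) ≤ ((β+i)/(α+i))^m := by
      rw [← e1]
      have hx0 : (0:ℝ) ≤ d/(α+i) := by positivity
      have hx : (-2:ℝ) ≤ d/(α+i) := by linarith
      exact one_add_mul_le_pow hx m
    have h3 : β + m*d + i ≤ (1 + m*(d/(α+i))) * (β+i) := by
      have hge : (1:ℝ) ≤ (β+i)/(α+i) := (one_le_div hai).2 (by linarith)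
      have hdd : d ≤ d/(α+i)*(β+i) := by
        rw [div_mul_eq_mul_div, le_div_iff₀ hai]
        nlinarith
      nlinarith
    calc (α+i)^m * (β + m*d + i)
        ≤ (α+i)^m * ((1 + m*(d/(α+i))) * (β+i)) :=
          mul_le_mul_of_nonneg_left h3 (by positivity)
      _ ≤ (α+i)^m * (((β+i)/(α+i))^m * (β+i)) :=
          mul_le_mul_of_nonneg_left (mul_le_mul_of_nonneg_right h2 hbi.le) (by positivity)
      _ = (β+i)^m * (β+i) := by
          rw [div_pow, mul_comm, mul_assoc]
          field_simp
      _ = (β+i) * (β+i)^m := mul_comm _ _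
  have hQsum : Summable Q := summable_pochR_ratio hβ0 (by linarith)
  have hQ0 : Tendsto Q atTop (𝓝 0) := hQsum.tendsto_atTop_zero
  have hQnn : ∀ n, 0 ≤ Q n := fun n =>
    div_nonneg (pochR_pos hβ0 n).le (pochR_pos (by positivity) n).le
  have hle : ∀ n, q n ≤ (Q n) ^ ((m:ℝ)⁻¹) := by
    intro n
    have e : q n = ((q n)^m : ℝ) ^ ((m:ℝ)⁻¹) := by
      rw [← Real.rpow_natCast (q n) m, ← Real.rpow_mul (hq0 n),
        mul_inv_cancel₀ hm0.ne', Real.rpow_one]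
    rw [e]
    exact Real.rpow_le_rpow (pow_nonneg (hq0 n) m) (key n) (by positivity)
  have hrt : Tendsto (fun n => (Q n) ^ ((m:ℝ)⁻¹)) atTop (𝓝 0) := by
    have := hQ0.rpow_const (p := (m:ℝ)⁻¹) (Or.inr (by positivity))
    simpa [Real.zero_rpow (by positivity : ((m:ℝ)⁻¹) ≠ 0)] using this
  exact squeeze_zero hq0 hle hrt

/-- The general term of the hypergeometric series at 1. -/
noncomputable def Aterm (a b c : ℂ) (n : ℕ) : ℂ :=
  pochC a n * pochC b n / (pochC c n * n.factorial)

lemma Aterm_succ (a b c : ℂ) (n : ℕ) :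
    Aterm a b c (n+1) = Aterm a b c n * ((a+n)*(b+n)/((c+n)*(n+1))) := by
  rw [Aterm, Aterm, pochC_succ, pochC_succ, pochC_succ, Nat.factorial_succ]
  rw [div_mul_div_comm]
  push_cast
  ring_nf

lemma norm_Aterm_succ (a b c : ℂ) (n : ℕ) :
    ‖Aterm a b c (n+1)‖ = ‖Aterm a b c n‖ * (‖a+n‖*‖b+n‖/(‖c+n‖*(n+1))) := by
  rw [Aterm_succ, norm_mul, norm_div, norm_mul, norm_mul]
  congr 2
  have : ((n:ℂ)+1) = ((n+1:ℕ):ℂ) := by push_cast; ring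
  rw [this, Complex.norm_natCast]
  push_cast; ring

lemma eventual_ratio (a b c : ℂ) {δ : ℝ} (hδ0 : 0 < δ) (hδr : δ < (c-a-b).re) :
    ∀ᶠ n : ℕ in atTop, ‖a+n‖*‖b+n‖*((2+δ)+n) ≤ ‖c+n‖*((1+n)^2) := by
  set A := a.re with hA; set B := b.re with hB; set C := c.re with hC
  have hr : δ < C - A - B := by
    simpa [Complex.sub_re, hA, hB, hC] using hδr
  set ε := (C - A - B - δ)/4 with hε
  have hε0 : 0 < ε := by rw [hε]; linarith
  have hcastN : ∀ x : ℝ, ∀ᶠ n : ℕ in atTop, x ≤ (n:ℝ) :=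
    fun x => tendsto_natCast_atTop_atTop.eventually_ge_atTop x
  -- bound for a
  have Ea : ∀ z : ℂ, ∀ᶠ n : ℕ in atTop, ‖z+n‖ ≤ n + z.re + ε := by
    intro z
    filter_upwards [hcastN ((z.im)^2/(2*ε) - z.re), hcastN (-z.re)] with n h1 h2
    have habs : ‖z+n‖^2 = (z.re+n)^2 + (z.im)^2 := by
      rw [Complex.sq_norm, Complex.normSq_apply]
      simp
      ring
    have him : (z.im)^2 ≤ 2*ε*(n + z.re) := by
      rw [sub_le_iff_le_add] at h1
      have := (div_le_iff₀ (by positivity : (0:ℝ) < 2*ε)).1 (by linarith : (z.im)^2/(2*ε) ≤ n + z.re)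
      linarith
    nlinarith [norm_nonneg (z+(n:ℂ)), sq_nonneg (‖z+(n:ℂ)‖ + (n + z.re + ε))]
  -- cubic coefficients
  set p : ℝ := C - A - B - δ - 2*ε with hp
  set q : ℝ := 2*C + 1 - (A+ε)*(B+ε) - (2+δ)*((A+ε)+(B+ε)) with hqdef
  set s : ℝ := C - (A+ε)*(B+ε)*(2+δ) with hsdef
  have hp0 : 0 < p := by rw [hp, hε]; linarith
  filter_upwards [Ea a, Ea b, hcastN ((|q|+|s|)/p), hcastN 1, hcastN (-(A+ε)),
    hcastN (-(B+ε)), hcastN (-C)] with n h1 h2 h3 h4 h5 h6 h7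
  have hq1 : -|q| ≤ q := neg_abs_le q
  have hs1 : -|s| ≤ s := neg_abs_le s
  have h3' : |q|+|s| ≤ p*n := by
    rw [div_le_iff₀ hp0] at h3; linarith
  have hn0 : (0:ℝ) ≤ (n:ℝ) := Nat.cast_nonneg n
  have hquad : 0 ≤ p*(n:ℝ)^2 + q*n + s := by
    have e1 : (|q|+|s|)*(n:ℝ) ≤ (p*n)*n := mul_le_mul_of_nonneg_right h3' hn0
    have e2 : (-|q|)*(n:ℝ) ≤ q*n := mul_le_mul_of_nonneg_right hq1 hn0
    have e3 : (0:ℝ) ≤ |s| * ((n:ℝ)-1) := mul_nonneg (abs_nonneg s) (by linarith)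
    nlinarith [e1, e2, e3, hs1]
  have hcubic : ((n:ℝ)+A+ε)*((n:ℝ)+B+ε)*((2+δ)+n) ≤ ((n:ℝ)+C)*((1+(n:ℝ))^2) := by
    have key : ((n:ℝ)+C)*((1+(n:ℝ))^2) - ((n:ℝ)+A+ε)*((n:ℝ)+B+ε)*((2+δ)+n)
        = p*(n:ℝ)^2 + q*(n:ℝ) + s := by rw [hp, hqdef, hsdef]; ring
    linarith [hquad, key]
  have hc3 : (n:ℝ) + C ≤ ‖c+n‖ := by
    have := Complex.re_le_norm (c+n)
    simpa [Complex.add_re, hC, add_comm] using this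
  have hnn : (0:ℝ) ≤ (1+(n:ℝ))^2 := by positivity
  have h1' : ‖a+(n:ℂ)‖ ≤ (n:ℝ)+A+ε := by rw [hA]; linarith
  have h2' : ‖b+(n:ℂ)‖ ≤ (n:ℝ)+B+ε := by rw [hB]; linarith
  calc ‖a+n‖*‖b+n‖*((2+δ)+n)
      ≤ (((n:ℝ)+A+ε)*((n:ℝ)+B+ε))*((2+δ)+n) := by
        refine mul_le_mul_of_nonneg_right ?_ (by positivity)
        exact mul_le_mul h1' h2' (norm_nonneg _) (by linarith)
    _ ≤ ((n:ℝ)+C)*((1+(n:ℝ))^2) := hcubic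
    _ ≤ ‖c+n‖*((1+(n:ℝ))^2) := mul_le_mul_of_nonneg_right hc3 hnn

lemma cne {c : ℂ} (hc : ∀ n : ℕ, c ≠ -(n:ℂ)) (n : ℕ) : c + n ≠ 0 := by
  intro h; exact hc n (by linear_combination h)

lemma exists_bound (a b c : ℂ) (hc : ∀ n : ℕ, c ≠ -(n:ℂ)) {δ : ℝ} (hδ0 : 0 < δ)
    (hδr : δ < (c-a-b).re) :
    ∃ M : ℝ, 0 ≤ M ∧ ∀ n, ‖Aterm a b c n‖ ≤ M * (pochR 1 n / pochR (2+δ) n) := by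
  obtain ⟨N, hN⟩ := Filter.eventually_atTop.1 (eventual_ratio a b c hδ0 hδr)
  set g : ℕ → ℝ := fun n => pochR 1 n / pochR (2+δ) n with hg
  have hgpos : ∀ n, 0 < g n := fun n =>
    div_pos (pochR_pos one_pos n) (pochR_pos (by linarith) n)
  have hgsucc : ∀ n : ℕ, g (n+1) = g n * ((1+n)/((2+δ)+n)) := by
    intro n
    rw [hg]; simp only [pochR_succ]
    field_simp
  have hstep : ∀ n, N ≤ n → ‖Aterm a b c (n+1)‖ ≤ ‖Aterm a b c n‖ * ((1+n)/((2+δ)+n)) := by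
    intro n hn
    rw [norm_Aterm_succ]
    refine mul_le_mul_of_nonneg_left ?_ (norm_nonneg _)
    have hc0 : (0:ℝ) < ‖c+(n:ℂ)‖ := norm_pos_iff.2 (cne hc n)
    rw [div_le_div_iff₀ (by positivity) (by positivity)]
    calc ‖a+(n:ℂ)‖*‖b+(n:ℂ)‖*((2+δ)+n) ≤ ‖c+(n:ℂ)‖*((1+(n:ℝ))^2) := hN n hn
      _ = (1+(n:ℝ))*(‖c+(n:ℂ)‖*((n:ℝ)+1)) := by ring
  have claim : ∀ k, ‖Aterm a b c (N+k)‖ ≤ (‖Aterm a b c N‖/g N) * g (N+k) := by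
    intro k
    induction k with
    | zero => simp [div_mul_cancel₀ _ (hgpos N).ne']
    | succ k ih =>
      have h1 := hstep (N+k) (Nat.le_add_right N k)
      have h2 : (0:ℝ) ≤ (1+((N+k:ℕ):ℝ))/((2+δ)+((N+k:ℕ):ℝ)) := by positivity
      calc ‖Aterm a b c (N+(k+1))‖ = ‖Aterm a b c ((N+k)+1)‖ := by ring_nf
        _ ≤ ‖Aterm a b c (N+k)‖ * ((1+((N+k:ℕ):ℝ))/((2+δ)+((N+k:ℕ):ℝ))) := h1
        _ ≤ ((‖Aterm a b c N‖/g N) * g (N+k)) * ((1+((N+k:ℕ):ℝ))/((2+δ)+((N+k:ℕ):ℝ))) :=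
            mul_le_mul_of_nonneg_right ih h2
        _ = (‖Aterm a b c N‖/g N) * g ((N+k)+1) := by rw [hgsucc (N+k)]; ring
        _ = (‖Aterm a b c N‖/g N) * g (N+(k+1)) := by ring_nf
  set M : ℝ := (Finset.range (N+1)).sup' ⟨0, by simp⟩ (fun k => ‖Aterm a b c k‖ / g k) with hM
  have hMge : ∀ k ≤ N, ‖Aterm a b c k‖ / g k ≤ M := by
    intro k hk
    rw [hM]
    exact Finset.le_sup' (fun k => ‖Aterm a b c k‖ / g k)
      (Finset.mem_range.2 (Nat.lt_succ_of_le hk))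
  have hM0 : 0 ≤ M := le_trans (div_nonneg (norm_nonneg _) (hgpos 0).le) (hMge 0 (Nat.zero_le N))
  refine ⟨M, hM0, fun n => ?_⟩
  rcases le_or_gt n N with h | h
  · have : ‖Aterm a b c n‖ = (‖Aterm a b c n‖ / g n) * g n :=
      (div_mul_cancel₀ _ (hgpos n).ne').symm
    rw [this]
    exact mul_le_mul_of_nonneg_right (hMge n h) (hgpos n).le
  · obtain ⟨k, rfl⟩ := Nat.le.dest h.le
    refine (claim k).trans (mul_le_mul_of_nonneg_right ?_ (hgpos _).le)
    exact (hMge N (le_refl N)).trans' (le_refl _)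

lemma summable_norm_Aterm (a b c : ℂ) (hre : 0 < (c-a-b).re) (hc : ∀ n : ℕ, c ≠ -(n:ℂ)) :
    Summable (fun n => ‖Aterm a b c n‖) := by
  set δ := min ((c-a-b).re) 1 / 2 with hδ
  have hδ0 : 0 < δ := by
    rw [hδ]; have := lt_min hre one_pos; positivity
  have hδr : δ < (c-a-b).re := by
    rw [hδ]
    calc min ((c-a-b).re) 1 / 2 < min ((c-a-b).re) 1 := by
          have := lt_min hre one_pos; linarith
      _ ≤ (c-a-b).re := min_le_left _ _
  obtain ⟨M, hM0, hM⟩ := exists_bound a b c hc hδ0 hδr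
  refine Summable.of_nonneg_of_le (fun n => norm_nonneg _) hM ?_
  exact ((summable_pochR_ratio one_pos (by linarith)).mul_left M)

lemma summable_Aterm (a b c : ℂ) (hre : 0 < (c-a-b).re) (hc : ∀ n : ℕ, c ≠ -(n:ℂ)) :
    Summable (Aterm a b c) :=
  (summable_norm_Aterm a b c hre hc).of_norm

lemma pochR_shift2 (x : ℝ) (n : ℕ) : pochR x (n+2) = x * (x+1) * pochR (x+2) n := by
  rw [pochR, Finset.prod_range_succ', Finset.prod_range_succ']
  rw [pochR]
  have : ∀ i : ℕ, (x + ((i:ℝ)+1+1)) = ((x+2) + i) := by intro i; ring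
  simp only [Nat.cast_add, Nat.cast_one, Nat.cast_zero, add_zero]
  rw [Finset.prod_congr rfl (fun i _ => this i)]
  ring

lemma tendsto_wseq (a b c : ℂ) (hre : 0 < (c-a-b).re) (hc : ∀ n : ℕ, c ≠ -(n:ℂ)) :
    Tendsto (fun n : ℕ => (n:ℂ)*(c+n) * Aterm a b (c+1) n) atTop (𝓝 0) := by
  have hc1 : ∀ n : ℕ, c+1 ≠ -(n:ℂ) := by
    intro n h
    exact hc (n+1) (by push_cast; linear_combination h)
  set r := (c-a-b).re with hr
  set δ' := 1 + min r 1 / 2 with hδ'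
  have hmin : 0 < min r 1 := lt_min hre one_pos
  have h1δ : 1 < δ' := by rw [hδ']; linarith
  have hδr : δ' < ((c+1)-a-b).re := by
    have : ((c+1)-a-b) = (c-a-b) + 1 := by ring
    rw [this, Complex.add_re, Complex.one_re, hδ', ← hr]
    have : min r 1 ≤ r := min_le_left _ _
    linarith
  obtain ⟨M, hM0, hM⟩ := exists_bound a b (c+1) hc1 (by linarith : (0:ℝ) < δ') hδr
  set K := M * ((1+‖c‖) * (δ' * (1+δ'))) with hK
  have bound : ∀ n : ℕ, ‖(n:ℂ)*(c+n) * Aterm a b (c+1) n‖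
      ≤ K * (pochR 1 (n+2) / pochR δ' (n+2)) := by
    intro n
    rw [norm_mul, norm_mul, Complex.norm_natCast]
    have e1 : ‖c+(n:ℂ)‖ ≤ ‖c‖ + n := by
      simpa using norm_add_le c (n:ℂ)
    have e2 : ‖Aterm a b (c+1) n‖ ≤ M * (pochR 1 n / pochR (2+δ') n) := hM n
    have p1 : 0 < pochR (2+δ') n := pochR_pos (by linarith) n
    have p2 : 0 < pochR 1 n := pochR_pos one_pos n
    have key : (n:ℝ) * (‖c‖+n) * (pochR 1 n / pochR (2+δ') n)
        ≤ (1+‖c‖) * (δ' * (1+δ')) * (pochR 1 (n+2) / pochR δ' (n+2)) := by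
      have eq1 : pochR 1 (n+2) = pochR 1 n * ((1+n)*(2+n)) := by
        rw [pochR_succ, pochR_succ]; push_cast; ring
      have eq2 : pochR δ' (n+2) = δ' * (1+δ') * pochR (2+δ') n := by
        rw [pochR_shift2]; ring_nf
      rw [eq1, eq2]
      have hδδ : 0 < δ' * (1+δ') := by positivity
      have lhs_eq : (n:ℝ) * (‖c‖+n) * (pochR 1 n / pochR (2+δ') n)
          = ((n:ℝ) * (‖c‖+n) * pochR 1 n)/pochR (2+δ') n := by ring
      have rhs_eq : (1+‖c‖)*(δ'*(1+δ'))*(pochR 1 n*((1+(n:ℝ))*(2+(n:ℝ))) / (δ'*(1+δ')*pochR (2+δ') n))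
          = ((1+‖c‖)*(δ'*(1+δ'))*(pochR 1 n*((1+(n:ℝ))*(2+(n:ℝ)))))/(δ'*(1+δ')*pochR (2+δ') n) := by
        ring
      rw [lhs_eq, rhs_eq, div_le_div_iff₀ p1 (by positivity)]
      have hnc : (n:ℝ) * (‖c‖+n) ≤ (1+‖c‖)*((1+n)*(2+n)) := by
        nlinarith [norm_nonneg c, Nat.cast_nonneg (α := ℝ) n,
          mul_nonneg (norm_nonneg c) (Nat.cast_nonneg (α := ℝ) n),
          mul_nonneg (norm_nonneg c) (sq_nonneg (n:ℝ))]
      calc (n:ℝ) * (‖c‖+n) * pochR 1 n * (δ' * (1+δ') * pochR (2+δ') n)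
          ≤ (1+‖c‖)*((1+(n:ℝ))*(2+(n:ℝ))) * pochR 1 n * (δ' * (1+δ') * pochR (2+δ') n) := by
            refine mul_le_mul_of_nonneg_right (mul_le_mul_of_nonneg_right hnc p2.le) ?_
            positivity
        _ = (1+‖c‖) * (δ' * (1+δ')) * (pochR 1 n * ((1+(n:ℝ))*(2+(n:ℝ)))) * pochR (2+δ') n := by
            ring
    calc (n:ℝ) * ‖c+(n:ℂ)‖ * ‖Aterm a b (c+1) n‖
        ≤ (n:ℝ) * (‖c‖+n) * (M * (pochR 1 n / pochR (2+δ') n)) := by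
          have g0 : (0:ℝ) ≤ (n:ℝ) := Nat.cast_nonneg n
          have g1 : (0:ℝ) ≤ ‖c‖ + n := by positivity
          refine mul_le_mul (mul_le_mul le_rfl e1 (norm_nonneg _) g0) e2 (norm_nonneg _) ?_
          positivity
      _ = M * ((n:ℝ) * (‖c‖+n) * (pochR 1 n / pochR (2+δ') n)) := by ring
      _ ≤ M * ((1+‖c‖) * (δ' * (1+δ')) * (pochR 1 (n+2) / pochR δ' (n+2))) :=
          mul_le_mul_of_nonneg_left key hM0
      _ = K * (pochR 1 (n+2) / pochR δ' (n+2)) := by rw [hK]; ring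
  have htend : Tendsto (fun n : ℕ => K * (pochR 1 (n+2) / pochR δ' (n+2))) atTop (𝓝 0) := by
    have h0 := (tendsto_pochR_ratio one_pos h1δ).comp (tendsto_add_atTop_nat 2)
    have := h0.const_mul K
    simpa using this
  exact squeeze_zero_norm bound htend

lemma hc_succ {c : ℂ} (hc : ∀ n : ℕ, c ≠ -(n:ℂ)) : ∀ n : ℕ, c+1 ≠ -(n:ℂ) := by
  intro n h
  exact hc (n+1) (by push_cast; linear_combination h)

lemma hre_succ {a b c : ℂ} (hre : 0 < (c-a-b).re) : 0 < ((c+1)-a-b).re := by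
  have h : ((c+1)-a-b) = (c-a-b) + 1 := by ring
  rw [h, Complex.add_re, Complex.one_re]; linarith

lemma rec_rel (a b c : ℂ) (hre : 0 < (c-a-b).re) (hc : ∀ n : ℕ, c ≠ -(n:ℂ)) :
    c*(c-a-b) * ∑' n, Aterm a b c n = (c-a)*(c-b) * ∑' n, Aterm a b (c+1) n := by
  have hc1 := hc_succ hc
  have hre1 := hre_succ (a := a) (b := b) hre
  have S1 := summable_Aterm a b c hre hc
  have S2 := summable_Aterm a b (c+1) hre1 hc1
  set w : ℕ → ℂ := fun n => (n:ℂ)*(c+n) * Aterm a b (c+1) n with hw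
  have hterm : ∀ n, c*(c-a-b) * Aterm a b c n - (c-a)*(c-b)*Aterm a b (c+1) n
      = w n - w (n+1) := by
    intro n
    have hQ : pochC (c+1) n ≠ 0 := pochC_ne_zero hc1 n
    have hf : ((n.factorial : ℂ)) ≠ 0 := Nat.cast_ne_zero.2 n.factorial_ne_zero
    have hcn : c + n ≠ 0 := cne hc n
    have hc0 : c ≠ 0 := by have := cne hc 0; simpa using this
    have hcn1 : c + 1 + n ≠ 0 := cne hc1 n
    have hn1 : ((n:ℂ) + 1) ≠ 0 := by
      have : ((n+1 : ℕ):ℂ) ≠ 0 := Nat.cast_ne_zero.2 (Nat.succ_ne_zero n)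
      simpa [Nat.cast_add, Nat.cast_one] using this
    have hpc : pochC c n = c * pochC (c+1) n / (c+n) := by
      rw [eq_div_iff hcn, ← pochC_succ, pochC_succ']
    rw [hw]
    simp only [Aterm, hpc, pochC_succ, Nat.factorial_succ]
    push_cast
    field_simp
    ring
  have hsum : Summable (fun n => c*(c-a-b)*Aterm a b c n - (c-a)*(c-b)*Aterm a b (c+1) n) :=
    (S1.mul_left _).sub (S2.mul_left _)
  have h1 := hsum.hasSum.tendsto_sum_nat
  have h2 : (fun N => ∑ n ∈ Finset.range N,
      (c*(c-a-b)*Aterm a b c n - (c-a)*(c-b)*Aterm a b (c+1) n)) = fun N => w 0 - w N := by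
    funext N
    rw [Finset.sum_congr rfl (fun n _ => hterm n), Finset.sum_range_sub']
  have hw0 : w 0 = 0 := by simp [hw]
  have h3 : Tendsto (fun N => w 0 - w N) atTop (𝓝 0) := by
    rw [hw0]
    simpa using (tendsto_wseq a b c hre hc).neg
  rw [h2] at h1
  have h4 : ∑' n, (c*(c-a-b)*Aterm a b c n - (c-a)*(c-b)*Aterm a b (c+1) n) = 0 :=
    tendsto_nhds_unique h1 h3
  rw [Summable.tsum_sub (S1.mul_left _) (S2.mul_left _), tsum_mul_left, tsum_mul_left] at h4
  linear_combination h4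

lemma hc_shift {c : ℂ} (hc : ∀ n : ℕ, c ≠ -(n:ℂ)) (m : ℕ) : ∀ n : ℕ, c + m ≠ -(n:ℂ) := by
  intro n h
  exact hc (m+n) (by push_cast; linear_combination h)

lemma hre_shift {a b c : ℂ} (hre : 0 < (c-a-b).re) (m : ℕ) : 0 < ((c+m)-a-b).re := by
  have h : ((c+m)-a-b) = (c-a-b) + m := by ring
  rw [h, Complex.add_re, Complex.natCast_re]
  have : (0:ℝ) ≤ m := Nat.cast_nonneg m
  linarith

lemma iter_rel (a b c : ℂ) (hre : 0 < (c-a-b).re) (hc : ∀ n : ℕ, c ≠ -(n:ℂ)) (m : ℕ) :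
    ∑' n, Aterm a b c n =
      (∏ k ∈ Finset.range m, ((c-a+k)*(c-b+k) / ((c+k)*((c-a-b)+k))))
        * ∑' n, Aterm a b (c+m) n := by
  induction m with
  | zero => simp
  | succ m ih =>
    rw [Finset.prod_range_succ, ih]
    have hcm : ∀ n : ℕ, c + m ≠ -(n:ℂ) := hc_shift hc m
    have hrem : 0 < ((c+m)-a-b).re := hre_shift hre m
    have hrec := rec_rel a b (c+(m:ℂ)) hrem hcm
    have hne1 : (c+(m:ℂ)) ≠ 0 := by
      have := cne hc m; simpa using this
    have hne2 : ((c+(m:ℂ))-a-b) ≠ 0 := by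
      intro h
      rw [h] at hrem; simp at hrem
    have hstep : ∑' n, Aterm a b (c+(m:ℂ)) n
        = ((c-a+m)*(c-b+m) / ((c+m)*((c-a-b)+m))) * ∑' n, Aterm a b (c+(m:ℂ)+1) n := by
      have e1 : (c+(m:ℂ))-a = c-a+m := by ring
      have e2 : (c+(m:ℂ))-b = c-b+m := by ring
      have e3 : (c+(m:ℂ))*((c+(m:ℂ))-a-b) = (c+m)*((c-a-b)+m) := by ring
      have hne3 : (c+(m:ℂ))*((c+(m:ℂ))-a-b) ≠ 0 := mul_ne_zero hne1 hne2
      rw [← e1, ← e2, ← e3]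
      rw [eq_comm, div_mul_eq_mul_div, div_eq_iff hne3]
      linear_combination -hrec
    rw [hstep]
    have ecast : c+(m:ℂ)+1 = c+((m+1:ℕ):ℂ) := by push_cast; ring
    rw [ecast]
    ring

lemma pochR_succ' (x : ℝ) (n : ℕ) : pochR x (n+1) = x * pochR (x+1) n := by
  rw [pochR, Finset.prod_range_succ', pochR]
  have : ∀ i : ℕ, (x + ((i:ℝ)+1)) = ((x+1) + i) := by intro i; ring
  simp only [Nat.cast_add, Nat.cast_one, Nat.cast_zero, add_zero]
  rw [Finset.prod_congr rfl (fun i _ => this i)]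
  ring

lemma one_le_pochR {x : ℝ} (hx : 1 ≤ x) (n : ℕ) : 1 ≤ pochR x n := by
  rw [pochR]
  calc (1:ℝ) = ∏ i ∈ Finset.range n, 1 := by simp
    _ ≤ ∏ i ∈ Finset.range n, (x + i) := by
        refine Finset.prod_le_prod (fun i _ => by norm_num) fun i _ => ?_
        have : (0:ℝ) ≤ i := Nat.cast_nonneg i
        linarith

lemma pochC_real_cast (x : ℝ) (n : ℕ) : pochC (x:ℂ) n = ((pochR x n : ℝ) : ℂ) := by
  rw [pochC, pochR]
  push_cast
  rfl

lemma norm_Aterm_real (x y z : ℝ) (hx : 0 ≤ x) (hy : 0 ≤ y) (hz : 0 < z) (n : ℕ) :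
    ‖Aterm (x:ℂ) (y:ℂ) (z:ℂ) n‖ = pochR x n * pochR y n / (pochR z n * n.factorial) := by
  rw [Aterm, pochC_real_cast, pochC_real_cast, pochC_real_cast]
  have hfact : ((n.factorial : ℂ)) = (((n.factorial : ℝ)) : ℂ) := by push_cast; rfl
  rw [hfact, ← Complex.ofReal_mul, ← Complex.ofReal_mul, ← Complex.ofReal_div,
    Complex.norm_real]
  have p1 : 0 ≤ pochR x n := Finset.prod_nonneg fun i _ => by positivity
  have p2 : 0 ≤ pochR y n := Finset.prod_nonneg fun i _ => by positivity
  have p3 : 0 < pochR z n * n.factorial :=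
    mul_pos (pochR_pos hz n) (by exact_mod_cast n.factorial_pos)
  rw [Real.norm_eq_abs, abs_of_nonneg (div_nonneg (mul_nonneg p1 p2) p3.le)]

lemma Aterm_zero (a b c : ℂ) : Aterm a b c 0 = 1 := by simp [Aterm, pochC]

set_option maxHeartbeats 1000000 in
lemma tendsto_tail (a b c : ℂ) (hre : 0 < (c-a-b).re) (hc : ∀ n : ℕ, c ≠ -(n:ℂ)) :
    Tendsto (fun m : ℕ => ∑' n, Aterm a b (c+(m:ℂ)) n) atTop (𝓝 1) := by
  obtain ⟨M₀, hM₀⟩ : ∃ M₀ : ℕ, max (1 - c.re) (‖a‖+‖b‖+1 - c.re) ≤ M₀ := exists_nat_ge _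
  set γ : ℝ := c.re + M₀ with hγ
  have hγ1 : 1 ≤ γ := by
    have := (le_max_left (1 - c.re) (‖a‖+‖b‖+1 - c.re)).trans hM₀
    rw [hγ]; linarith
  have hγab : ‖a‖ + ‖b‖ + 1 ≤ γ := by
    have := (le_max_right (1 - c.re) (‖a‖+‖b‖+1 - c.re)).trans hM₀
    rw [hγ]; linarith
  have hγ0 : 0 < γ := by linarith
  have hγc : ∀ n : ℕ, (γ:ℂ) ≠ -(n:ℂ) := by
    intro n h
    have h' : γ = -(n:ℝ) := by exact_mod_cast congrArg Complex.re h
    have : (0:ℝ) ≤ (n:ℝ) := Nat.cast_nonneg n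
    linarith
  have hγre : 0 < ((γ:ℂ) - ‖a‖ - ‖b‖).re := by
    simp only [Complex.sub_re, Complex.ofReal_re]
    linarith
  set g : ℕ → ℝ := fun n =>
    pochR ‖a‖ (n+1) * pochR ‖b‖ (n+1) / (pochR γ (n+1) * (n+1).factorial) with hg
  have hgeq : ∀ n, g n = ‖Aterm (‖a‖:ℂ) (‖b‖:ℂ) (γ:ℂ) (n+1)‖ := by
    intro n
    rw [hg, norm_Aterm_real _ _ _ (norm_nonneg a) (norm_nonneg b) hγ0]
  have base : Summable (fun n : ℕ => ‖Aterm (‖a‖:ℂ) (‖b‖:ℂ) (γ:ℂ) (n+1)‖) :=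
    (summable_nat_add_iff (f := fun n : ℕ => ‖Aterm (‖a‖:ℂ) (‖b‖:ℂ) (γ:ℂ) n‖) 1).2
      (summable_norm_Aterm _ _ _ hγre hγc)
  have hgsum : Summable g := base.congr (fun n => (hgeq n).symm)
  -- norm formula
  have normA : ∀ (z : ℂ) (k : ℕ), ‖Aterm a b z k‖
      = ‖pochC a k‖ * ‖pochC b k‖ / (‖pochC z k‖ * k.factorial) := by
    intro z k
    rw [Aterm, norm_div, norm_mul, norm_mul, Complex.norm_natCast]
  -- domination
  have hbound : ∀ᶠ m : ℕ in atTop, ∀ n : ℕ, ‖Aterm a b (c+(m:ℂ)) (n+1)‖ ≤ g n := by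
    filter_upwards [eventually_ge_atTop M₀] with m hm n
    set k := n+1 with hk
    have hrek : γ ≤ (c+(m:ℂ)).re := by
      rw [Complex.add_re, Complex.natCast_re, hγ]
      have : (M₀:ℝ) ≤ m := Nat.cast_le.2 hm
      linarith
    have hd : pochR γ k ≤ ‖pochC (c+(m:ℂ)) k‖ := le_norm_pochC hγ0 hrek k
    rw [normA, hg]
    refine div_le_div₀ (mul_nonneg (Finset.prod_nonneg fun i _ => by positivity)
      (Finset.prod_nonneg fun i _ => by positivity)) ?_ ?_ ?_
    · exact mul_le_mul (norm_pochC_le a k) (norm_pochC_le b k) (norm_nonneg _)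
        (Finset.prod_nonneg fun i _ => by positivity)
    · have := pochR_pos hγ0 k
      positivity
    · exact mul_le_mul_of_nonneg_right hd (by positivity)
  -- pointwise limits
  have hpt : ∀ n : ℕ, Tendsto (fun m : ℕ => Aterm a b (c+(m:ℂ)) (n+1)) atTop (𝓝 0) := by
    intro n
    set k := n+1 with hk
    set Kn : ℝ := pochR ‖a‖ k * pochR ‖b‖ k / k.factorial with hKn
    have hKn0 : 0 ≤ Kn := by
      have p1 : (0:ℝ) ≤ pochR ‖a‖ k := Finset.prod_nonneg fun i _ => by positivity
      have p2 : (0:ℝ) ≤ pochR ‖b‖ k := Finset.prod_nonneg fun i _ => by positivity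
      positivity
    have hb : ∀ᶠ m : ℕ in atTop, ‖Aterm a b (c+(m:ℂ)) k‖ ≤ Kn / (c.re + m) := by
      filter_upwards [eventually_ge_atTop M₀] with m hm
      have h1 : 1 ≤ c.re + m := by
        have : (M₀:ℝ) ≤ m := Nat.cast_le.2 hm
        rw [hγ] at hγ1; linarith
      have hcm0 : 0 < c.re + m := by linarith
      have hlow : c.re + m ≤ ‖pochC (c+(m:ℂ)) k‖ := by
        refine le_trans ?_ (le_norm_pochC hcm0 (by rw [Complex.add_re, Complex.natCast_re]) k)
        rw [hk, pochR_succ' _ n]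
        have h2 : 1 ≤ pochR (c.re + m + 1) n := one_le_pochR (by linarith) n
        nlinarith
      rw [normA]
      have hfk : (0:ℝ) < k.factorial := by exact_mod_cast k.factorial_pos
      have hnum : ‖pochC a k‖ * ‖pochC b k‖ ≤ pochR ‖a‖ k * pochR ‖b‖ k :=
        mul_le_mul (norm_pochC_le a k) (norm_pochC_le b k) (norm_nonneg _)
          (Finset.prod_nonneg fun i _ => by positivity)
      have hden : (c.re+m) * k.factorial ≤ ‖pochC (c+(m:ℂ)) k‖ * k.factorial :=
        mul_le_mul_of_nonneg_right hlow hfk.le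
      have hp1 : (0:ℝ) ≤ pochR ‖a‖ k * pochR ‖b‖ k :=
        mul_nonneg (Finset.prod_nonneg fun i _ => by positivity)
          (Finset.prod_nonneg fun i _ => by positivity)
      calc ‖pochC a k‖ * ‖pochC b k‖ / (‖pochC (c+(m:ℂ)) k‖ * k.factorial)
          ≤ (pochR ‖a‖ k * pochR ‖b‖ k)/((c.re+m) * k.factorial) :=
            div_le_div₀ hp1 hnum (by positivity) hden
        _ = Kn/(c.re+m) := by
              rw [hKn]; field_simp
    have htd : Tendsto (fun m : ℕ => Kn / (c.re + m)) atTop (𝓝 0) := by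
      refine Tendsto.div_atTop tendsto_const_nhds ?_
      exact tendsto_atTop_add_const_left _ _ tendsto_natCast_atTop_atTop
    exact squeeze_zero_norm' hb htd
  have key := tendsto_tsum_of_dominated_convergence hgsum hpt hbound
  simp only [tsum_zero] at key
  have hsplit : ∀ m : ℕ, ∑' n, Aterm a b (c+(m:ℂ)) n
      = 1 + ∑' n, Aterm a b (c+(m:ℂ)) (n+1) := by
    intro m
    rw [Summable.tsum_eq_zero_add (summable_Aterm a b (c+(m:ℂ)) (hre_shift hre m) (hc_shift hc m)),
      Aterm_zero]
  rw [show (fun m : ℕ => ∑' n, Aterm a b (c+(m:ℂ)) n)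
      = (fun m : ℕ => 1 + ∑' n, Aterm a b (c+(m:ℂ)) (n+1)) from funext hsplit]
  simpa using tendsto_const_nhds.add key

lemma tendsto_prod (a b c : ℂ) (hre : 0 < (c-a-b).re) (hc : ∀ n : ℕ, c ≠ -(n:ℂ)) :
    Tendsto (fun m : ℕ => ∏ k ∈ Finset.range m, ((c-a+k)*(c-b+k) / ((c+k)*((c-a-b)+k)))) atTop
      (𝓝 (Complex.Gamma c * Complex.Gamma (c-a-b)
        / (Complex.Gamma (c-a) * Complex.Gamma (c-b)))) := by
  have hsplit : ∀ m : ℕ, ∏ k ∈ Finset.range m, ((c-a+k)*(c-b+k) / ((c+k)*((c-a-b)+k)))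
      = ((∏ k ∈ Finset.range m, (c-a+k)) * ∏ k ∈ Finset.range m, (c-b+k))
        / ((∏ k ∈ Finset.range m, (c+k)) * ∏ k ∈ Finset.range m, ((c-a-b)+k)) := by
    intro m
    rw [Finset.prod_div_distrib, Finset.prod_mul_distrib, Finset.prod_mul_distrib]
  by_cases hdeg : (∃ k : ℕ, c - a = -(k:ℂ)) ∨ (∃ k : ℕ, c - b = -(k:ℂ))
  · -- degenerate case : RHS is 0 and the product is eventually 0
    have hzero : Complex.Gamma (c-a) * Complex.Gamma (c-b) = 0 := by
      rcases hdeg with ⟨k, hk⟩ | ⟨k, hk⟩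
      · rw [(Complex.Gamma_eq_zero_iff _).2 ⟨k, hk⟩, zero_mul]
      · rw [(Complex.Gamma_eq_zero_iff _).2 ⟨k, hk⟩, mul_zero]
    rw [hzero, div_zero]
    have hev : ∀ᶠ m : ℕ in atTop,
        (∏ k ∈ Finset.range m, ((c-a+k)*(c-b+k) / ((c+k)*((c-a-b)+k)))) = 0 := by
      obtain ⟨k₀, hk₀⟩ | ⟨k₀, hk₀⟩ := hdeg
      · filter_upwards [eventually_ge_atTop (k₀+1)] with m hm
        refine Finset.prod_eq_zero (Finset.mem_range.2 (by omega : k₀ < m)) ?_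
        rw [show c-a+(k₀:ℂ) = 0 from by rw [hk₀]; ring]
        simp
      · filter_upwards [eventually_ge_atTop (k₀+1)] with m hm
        refine Finset.prod_eq_zero (Finset.mem_range.2 (by omega : k₀ < m)) ?_
        rw [show c-b+(k₀:ℂ) = 0 from by rw [hk₀]; ring]
        simp
    exact Tendsto.congr' (hev.mono fun m hm => hm.symm) tendsto_const_nhds
  · push_neg at hdeg
    obtain ⟨hda, hdb⟩ := hdeg
    have hGa : Complex.Gamma (c-a) ≠ 0 := Complex.Gamma_ne_zero hda
    have hGb : Complex.Gamma (c-b) ≠ 0 := Complex.Gamma_ne_zero hdb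
    have hPCA : ∀ m : ℕ, (∏ k ∈ Finset.range m, (c-a+k)) ≠ 0 := fun m =>
      pochC_ne_zero (fun n h => hda n (by linear_combination h)) m
    have hPCB : ∀ m : ℕ, (∏ k ∈ Finset.range m, (c-b+k)) ≠ 0 := fun m =>
      pochC_ne_zero (fun n h => hdb n (by linear_combination h)) m
    have hPC : ∀ m : ℕ, (∏ k ∈ Finset.range m, (c+k)) ≠ 0 := fun m =>
      pochC_ne_zero hc m
    have habne : ∀ n : ℕ, (c-a-b) ≠ -(n:ℂ) := by
      intro n h
      have : ((c-a-b)+n).re = 0 := by rw [h]; simp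
      have h2 : ((c-a-b)+n).re = (c-a-b).re + n := by
        rw [Complex.add_re, Complex.natCast_re]
      have h3 : (0:ℝ) ≤ n := Nat.cast_nonneg n
      rw [h2] at this
      linarith
    have hPAB : ∀ m : ℕ, (∏ k ∈ Finset.range m, ((c-a-b)+k)) ≠ 0 := fun m =>
      pochC_ne_zero habne m
    -- identity with GammaSeq for m ≥ 1
    have hGS : ∀ m : ℕ, 1 ≤ m →
        (∏ k ∈ Finset.range (m+1), ((c-a+k)*(c-b+k) / ((c+k)*((c-a-b)+k))))
        = Complex.GammaSeq c m * Complex.GammaSeq (c-a-b) m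
          / (Complex.GammaSeq (c-a) m * Complex.GammaSeq (c-b) m) := by
      intro m hm
      have hm0 : (m:ℂ) ≠ 0 := Nat.cast_ne_zero.2 (by omega)
      have hpow : (m:ℂ)^c * (m:ℂ)^(c-a-b) = (m:ℂ)^(c-a) * (m:ℂ)^(c-b) := by
        rw [← Complex.cpow_add _ _ hm0, ← Complex.cpow_add _ _ hm0]
        ring_nf
      have hfne : ((m.factorial : ℂ)) ≠ 0 := Nat.cast_ne_zero.2 m.factorial_ne_zero
      have hXne : (m:ℂ)^c * (m:ℂ)^(c-a-b) ≠ 0 := by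
        refine mul_ne_zero ?_ ?_ <;>
        · intro h
          exact hm0 ((Complex.cpow_eq_zero_iff _ _).1 h).1
      rw [hsplit, Complex.GammaSeq, Complex.GammaSeq, Complex.GammaSeq, Complex.GammaSeq]
      rw [div_mul_div_comm, div_mul_div_comm]
      rw [show (m:ℂ)^c * (m.factorial:ℂ) * ((m:ℂ)^(c-a-b) * (m.factorial:ℂ))
        = ((m:ℂ)^c * (m:ℂ)^(c-a-b)) * ((m.factorial:ℂ) * (m.factorial:ℂ)) from by ring]
      rw [show (m:ℂ)^(c-a) * (m.factorial:ℂ) * ((m:ℂ)^(c-b) * (m.factorial:ℂ))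
        = ((m:ℂ)^(c-a) * (m:ℂ)^(c-b)) * ((m.factorial:ℂ) * (m.factorial:ℂ)) from by ring]
      rw [← hpow, div_div_div_eq,
        mul_comm ((∏ j ∈ Finset.range (m+1), (c+(j:ℂ))) * ∏ j ∈ Finset.range (m+1), ((c-a-b)+(j:ℂ)))
          ((m:ℂ)^c * (m:ℂ)^(c-a-b) * ((m.factorial:ℂ) * (m.factorial:ℂ))),
        mul_div_mul_left _ _ (mul_ne_zero hXne (mul_ne_zero hfne hfne))]
    -- limit of the GammaSeq ratio
    have hlim : Tendsto (fun m : ℕ => Complex.GammaSeq c m * Complex.GammaSeq (c-a-b) m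
        / (Complex.GammaSeq (c-a) m * Complex.GammaSeq (c-b) m)) atTop
        (𝓝 (Complex.Gamma c * Complex.Gamma (c-a-b)
          / (Complex.Gamma (c-a) * Complex.Gamma (c-b)))) := by
      exact Tendsto.div
        ((Complex.GammaSeq_tendsto_Gamma c).mul (Complex.GammaSeq_tendsto_Gamma (c-a-b)))
        ((Complex.GammaSeq_tendsto_Gamma (c-a)).mul (Complex.GammaSeq_tendsto_Gamma (c-b)))
        (mul_ne_zero hGa hGb)
    -- transfer along the shift
    rw [show (fun m : ℕ => ∏ k ∈ Finset.range m, ((c-a+k)*(c-b+k) / ((c+k)*((c-a-b)+k))))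
      = (fun m => ∏ k ∈ Finset.range m, ((c-a+k)*(c-b+k) / ((c+k)*((c-a-b)+k)))) from rfl]
    rw [← tendsto_add_atTop_iff_nat 1]
    exact Tendsto.congr' (by
      filter_upwards [eventually_ge_atTop 1] with m hm
      exact (hGS m hm).symm) hlim

/-- Gauss hypergeometric series `₂F₁(a,b;c;x)`. -/
noncomputable def F21C (a b c x : ℂ) : ℂ :=
  ∑' n : ℕ, pochC a n * pochC b n / (pochC c n * n.factorial) * x ^ n

/-- Gauss's summation theorem. -/
theorem stmt1 (a b c : ℂ) (hre : 0 < (c - a - b).re)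
    (hc : ∀ n : ℕ, c ≠ -(n : ℂ)) :
    F21C a b c 1 =
      Complex.Gamma c * Complex.Gamma (c - a - b)
        / (Complex.Gamma (c - a) * Complex.Gamma (c - b)) := by
  have hF : F21C a b c 1 = ∑' n, Aterm a b c n := by
    simp [F21C, Aterm]
  have h1 : Tendsto (fun m : ℕ =>
      (∏ k ∈ Finset.range m, ((c-a+k)*(c-b+k) / ((c+k)*((c-a-b)+k))))
        * ∑' n, Aterm a b (c+(m:ℂ)) n) atTop
      (𝓝 ((Complex.Gamma c * Complex.Gamma (c-a-b)
        / (Complex.Gamma (c-a) * Complex.Gamma (c-b))) * 1)) :=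
    (tendsto_prod a b c hre hc).mul (tendsto_tail a b c hre hc)
  have h2 : (fun m : ℕ =>
      (∏ k ∈ Finset.range m, ((c-a+k)*(c-b+k) / ((c+k)*((c-a-b)+k))))
        * ∑' n, Aterm a b (c+(m:ℂ)) n) = fun _ => ∑' n, Aterm a b c n :=
    funext fun m => (iter_rel a b c hre hc m).symm
  rw [h2] at h1
  rw [hF]
  have hu := tendsto_nhds_unique h1 tendsto_const_nhds
  linear_combination -hu
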